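/- Let N > 0, α > 0, Q > 0, R > 0, and let φ : [0,1]² × ℝ → ℝ be such that φ(x,·) is real-analytic for each x with 2π |∂_θ^k φ(x,θ)| ≤ Q · k! · R^{−k} for all k ≥ 0, x ∈ [0,1]², and |θ| ≤ α/√N; assume α ≤ R√N/2. Define f_k(x) = 2π ∂_θ^k φ(x,0), and g₀(r,θ) = r(1 − cos θ), g₁(r,θ) = r(θ − sin θ), g_k(r,θ) = r θ^k / k! for k ≥ 2. Then: (a) 2π Φ_ℓ(x,(r,θ)) = Σ_{k=0}^∞ f_k(x) g_k(r,θ) for all x ∈ [0,1]² and (r,θ) ∈ W_N; and (b) for every 0 < ε ≤ 1 and every integer K ≥ 2 with K ≥ log(2√2 Q N ε⁻¹) / log(R√N/α), one has |e^{2πi Φ_ℓ(x,(r,θ))} − exp( i Σ_{k=0}^{K−1} f_k(x) g_k(r,θ) )| ≤ ε/2 for all x ∈ [0,1]² and (r,θ) ∈ W_N. -/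

import Mathlib

open scoped BigOperators

set_option maxHeartbeats 1000000

open Filter Topology

private lemma my_iDW_eq {f : ℝ → ℝ} (hf : ContDiff ℝ ⊤ f) {s : Set ℝ}
    (hs : UniqueDiffOn ℝ s) {x : ℝ} (hx : x ∈ s) (n : ℕ) :
    iteratedDerivWithin n f s x = iteratedDeriv n f x := by
  have h1 : HasFTaylorSeriesUpToOn (n : ℕ∞) f (ftaylorSeries ℝ f) s :=
    (contDiff_iff_ftaylorSeries.mp (hf.of_le le_top)).hasFTaylorSeriesUpToOn s
  have h2 := h1.eq_iteratedFDerivWithin_of_uniqueDiffOn le_rfl hs hx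
  rw [iteratedDerivWithin_eq_iteratedFDerivWithin, iteratedDeriv_eq_iteratedFDeriv, ← h2]
  rfl

private lemma taylor_hasSum {B r ρ : ℝ} (hB : 0 ≤ B) (hr : 0 < r) (hρ : 0 ≤ ρ) (hρr : ρ ≤ r / 2) :
    ∀ f : ℝ → ℝ, ContDiff ℝ ⊤ f →
    (∀ (k : ℕ) (t : ℝ), |t| ≤ ρ → |iteratedDeriv k f t| ≤ B * k.factorial / r ^ k) →
    ∀ θ : ℝ, |θ| ≤ ρ →
    HasSum (fun k : ℕ => iteratedDeriv k f 0 * θ ^ k / (k.factorial : ℝ)) (f θ) := by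
  have main : ∀ f : ℝ → ℝ, ContDiff ℝ ⊤ f →
      (∀ (k : ℕ) (t : ℝ), |t| ≤ ρ → |iteratedDeriv k f t| ≤ B * k.factorial / r ^ k) →
      ∀ θ : ℝ, 0 ≤ θ → |θ| ≤ ρ →
      HasSum (fun k : ℕ => iteratedDeriv k f 0 * θ ^ k / (k.factorial : ℝ)) (f θ) := by
    intro f hf hb θ hθ0 hθρ
    have hθhalf : θ ≤ r / 2 := le_trans (le_trans (le_abs_self θ) hθρ) hρr
    have hterm : ∀ k : ℕ, ‖iteratedDeriv k f 0 * θ ^ k / (k.factorial : ℝ)‖ ≤ B * (1/2) ^ k := by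
      intro k
      have hfk : ((k.factorial : ℝ)) ≠ 0 := Nat.cast_ne_zero.2 k.factorial_ne_zero
      have h1 : ‖iteratedDeriv k f 0 * θ ^ k / (k.factorial : ℝ)‖
          = |iteratedDeriv k f 0| * θ ^ k / (k.factorial : ℝ) := by
        rw [Real.norm_eq_abs, abs_div, abs_mul, abs_pow, abs_of_nonneg hθ0, Nat.abs_cast]
      rw [h1]
      calc |iteratedDeriv k f 0| * θ ^ k / (k.factorial : ℝ)
          ≤ (B * k.factorial / r ^ k) * (r/2) ^ k / (k.factorial : ℝ) := by
            gcongr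
            exact hb k 0 (by simpa using hρ)
        _ = B * (1/2) ^ k := by
            rw [div_pow, div_pow]
            field_simp
            ring
    have hsummable : Summable (fun k : ℕ => iteratedDeriv k f 0 * θ ^ k / (k.factorial : ℝ)) :=
      Summable.of_norm_bounded
        (((hasSum_geometric_of_lt_one (by norm_num) (by norm_num)).summable).mul_left B) hterm
    rcases eq_or_lt_of_le hθ0 with heq | hpos
    · have hfun : (fun k : ℕ => iteratedDeriv k f 0 * θ ^ k / (k.factorial : ℝ))
          = fun k : ℕ => if k = 0 then f 0 else 0 := by
        funext k
        cases k with
        | zero => simp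
        | succ n => simp [← heq, zero_pow]
      rw [hfun, ← heq]
      exact hasSum_ite_eq 0 (f 0)
    · set s : Set ℝ := Set.Icc (0:ℝ) θ with hs
      have husc : UniqueDiffOn ℝ s := uniqueDiffOn_Icc hpos
      have hiDW : ∀ (k : ℕ) (y : ℝ), y ∈ s → iteratedDerivWithin k f s y = iteratedDeriv k f y :=
        fun k y hy => my_iDW_eq hf husc hy k
      have h0s : (0:ℝ) ∈ s := Set.left_mem_Icc.2 hpos.le
      have hsum_eq : ∀ n : ℕ, taylorWithinEval f n s 0 θ
          = ∑ k ∈ Finset.range (n+1), iteratedDeriv k f 0 * θ ^ k / (k.factorial : ℝ) := by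
        intro n
        rw [taylor_within_apply]
        refine Finset.sum_congr rfl fun k _ => ?_
        rw [hiDW k 0 h0s, smul_eq_mul, sub_zero]
        ring
      have hrem : ∀ n : ℕ,
          |f θ - ∑ k ∈ Finset.range (n+1), iteratedDeriv k f 0 * θ ^ k / (k.factorial : ℝ)|
          ≤ B * (n+1) * (1/2) ^ (n+1) := by
        intro n
        rw [← hsum_eq n]
        have hC : ∀ y ∈ s, ‖iteratedDerivWithin (n+1) f s y‖
            ≤ B * ((n+1).factorial : ℝ) / r ^ (n+1) := by
          intro y hy
          rw [hiDW _ y hy, Real.norm_eq_abs]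
          refine hb _ y ?_
          rw [abs_of_nonneg hy.1]
          exact le_trans hy.2 (le_trans (le_abs_self θ) hθρ)
        have hT := taylor_mean_remainder_bound hpos.le
          ((hf.of_le le_top).contDiffOn) (Set.right_mem_Icc.2 hpos.le) hC
        rw [Real.norm_eq_abs, sub_zero] at hT
        refine hT.trans ?_
        have heq2 : B * ((n+1).factorial : ℝ) / r ^ (n+1) * θ ^ (n+1) / (n.factorial : ℝ)
            = B * (n+1) * (θ/r) ^ (n+1) := by
          rw [Nat.factorial_succ, div_pow]
          push_cast
          have hfk : ((n.factorial : ℝ)) ≠ 0 := Nat.cast_ne_zero.2 n.factorial_ne_zero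
          field_simp
        rw [heq2]
        have h3 : (θ/r) ^ (n+1) ≤ (1/2:ℝ) ^ (n+1) :=
          pow_le_pow_left₀ (div_nonneg hθ0 hr.le)
            (by rw [div_le_div_iff₀ hr (by norm_num)]; linarith) _
        exact mul_le_mul_of_nonneg_left h3 (by positivity)
      have hS := hsummable.hasSum
      have hten : Tendsto
          (fun n : ℕ => ∑ k ∈ Finset.range n, iteratedDeriv k f 0 * θ ^ k / (k.factorial : ℝ))
          atTop (𝓝 (f θ)) := by
        rw [← tendsto_add_atTop_iff_nat 1]
        have h0 : Tendsto (fun n : ℕ => B * ((n+1) * (1/2:ℝ) ^ (n+1))) atTop (𝓝 0) := by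
          have h1 := (tendsto_self_mul_const_pow_of_lt_one
            (by norm_num : (0:ℝ) ≤ 1/2) (by norm_num : (1:ℝ)/2 < 1)).comp
            (tendsto_add_atTop_nat 1)
          have h2 := h1.const_mul B
          simpa [Function.comp, mul_assoc] using h2
        have h1 : Tendsto (fun n : ℕ => f θ -
            ∑ k ∈ Finset.range (n+1), iteratedDeriv k f 0 * θ ^ k / (k.factorial : ℝ))
            atTop (𝓝 0) := by
          refine squeeze_zero_norm (fun n => ?_) h0
          rw [Real.norm_eq_abs]
          exact (hrem n).trans_eq (by ring)
        have h2 := (tendsto_const_nhds (x := f θ) (f := atTop)).sub h1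
        simpa using h2
      exact (tendsto_nhds_unique hS.tendsto_sum_nat hten) ▸ hS
  intro f hf hb θ hθρ
  rcases le_or_gt 0 θ with h | h
  · exact main f hf hb θ h hθρ
  · set g : ℝ → ℝ := fun t => f (-t) with hg
    have hgc : ContDiff ℝ ⊤ g := hf.comp (contDiff_neg)
    have hgb : ∀ (k : ℕ) (t : ℝ), |t| ≤ ρ → |iteratedDeriv k g t| ≤ B * k.factorial / r ^ k := by
      intro k t ht
      rw [hg, iteratedDeriv_comp_neg, smul_eq_mul, abs_mul, abs_pow, abs_neg, abs_one,
        one_pow, one_mul]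
      exact hb k (-t) (by rwa [abs_neg])
    have hms := main g hgc hgb (-θ) (by linarith) (by rwa [abs_neg])
    have hfun : (fun k : ℕ => iteratedDeriv k f 0 * θ ^ k / (k.factorial : ℝ))
        = fun k : ℕ => iteratedDeriv k g 0 * (-θ) ^ k / (k.factorial : ℝ) := by
      funext k
      rw [hg, iteratedDeriv_comp_neg, neg_zero, smul_eq_mul,
        mul_comm ((-1:ℝ) ^ k), mul_assoc, ← mul_pow]
      norm_num
    have hval : g (-θ) = f θ := by rw [hg]; simp
    rw [hfun, ← hval]
    exact hms
private lemma exp_I_dist (a b : ℝ) :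
    ‖Complex.exp (a * Complex.I) - Complex.exp (b * Complex.I)‖ ≤ |a - b| := by
  have key : ∀ t : ℝ, ‖Complex.exp (t * Complex.I) - 1‖ ≤ |t| := by
    intro t
    have h1 : Complex.exp (t * Complex.I) - 1 =
        Complex.ofReal (Real.cos t - 1) + Complex.ofReal (Real.sin t) * Complex.I := by
      rw [Complex.exp_mul_I]
      push_cast [← Complex.ofReal_cos, ← Complex.ofReal_sin]
      ring
    have h2 : (‖Complex.exp (t * Complex.I) - 1‖)^2 = 2 - 2 * Real.cos t := by
      rw [h1, Complex.sq_norm, Complex.normSq_apply]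
      simp only [Complex.add_re, Complex.ofReal_re, Complex.mul_re, Complex.I_re,
        Complex.ofReal_im, Complex.I_im, Complex.add_im, Complex.mul_im]
      nlinarith [Real.sin_sq_add_cos_sq t]
    have hc : Real.cos t = 2 * Real.cos (t/2)^2 - 1 := by
      have := Real.cos_two_mul (t/2)
      rw [show 2*(t/2) = t by ring] at this; linarith
    have h3 : 2 - 2 * Real.cos t ≤ t^2 := by
      nlinarith [Real.sin_sq_le_sq (x := t/2), Real.sin_sq_add_cos_sq (t/2)]
    nlinarith [norm_nonneg (Complex.exp (t * Complex.I) - 1), abs_nonneg t, sq_abs t]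
  have h4 : ‖Complex.exp ((b:ℂ) * Complex.I)‖ = 1 :=
    Complex.norm_exp_ofReal_mul_I b
  have h5 : Complex.exp ((a:ℂ) * Complex.I) - Complex.exp ((b:ℂ) * Complex.I) =
      Complex.exp ((b:ℂ) * Complex.I) * (Complex.exp (((a - b : ℝ):ℂ) * Complex.I) - 1) := by
    rw [mul_sub, mul_one, ← Complex.exp_add]
    push_cast
    ring_nf
  rw [h5, norm_mul, h4, one_mul]
  exact key (a - b)

open scoped BigOperators

theorem stmt_9 (N α Q R : ℝ) (hN : 0 < N) (hα : 0 < α) (hQ : 0 < Q) (hR : 0 < R)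
    (φ : ℝ × ℝ → ℝ → ℝ)
    (hsmooth : ∀ x ∈ Set.Icc (0:ℝ) 1 ×ˢ Set.Icc (0:ℝ) 1, ContDiff ℝ ⊤ (φ x))
    (hQR : ∀ k : ℕ, ∀ x ∈ Set.Icc (0:ℝ) 1 ×ˢ Set.Icc (0:ℝ) 1, ∀ θ : ℝ,
      |θ| ≤ α / Real.sqrt N →
      2 * Real.pi * |iteratedDeriv k (φ x) θ| ≤ Q * (k.factorial : ℝ) / R ^ k)
    (hadm : α ≤ R * Real.sqrt N / 2) :
    (∀ x ∈ Set.Icc (0:ℝ) 1 ×ˢ Set.Icc (0:ℝ) 1, ∀ w : ℝ × ℝ,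
      0 < w.1 → w.1 ≤ Real.sqrt 2 / 2 * N → |w.2| ≤ α / Real.sqrt N →
      HasSum (fun k : ℕ => (2 * Real.pi * iteratedDeriv k (φ x) 0) *
          (if k = 0 then w.1 * (1 - Real.cos w.2)
           else if k = 1 then w.1 * (w.2 - Real.sin w.2)
           else w.1 * w.2 ^ k / (k.factorial : ℝ)))
        (2 * Real.pi *
          (w.1 * (φ x w.2 - Real.cos w.2 * φ x 0 - Real.sin w.2 * deriv (φ x) 0)))) ∧
    (∀ ε : ℝ, 0 < ε → ε ≤ 1 → ∀ K : ℕ, 2 ≤ K →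
      Real.log (2 * Real.sqrt 2 * Q * N / ε) / Real.log (R * Real.sqrt N / α) ≤ (K : ℝ) →
      ∀ x ∈ Set.Icc (0:ℝ) 1 ×ˢ Set.Icc (0:ℝ) 1, ∀ w : ℝ × ℝ,
        0 < w.1 → w.1 ≤ Real.sqrt 2 / 2 * N → |w.2| ≤ α / Real.sqrt N →
        ‖Complex.exp (2 * (Real.pi : ℂ) * Complex.I *
            ((w.1 * (φ x w.2 - Real.cos w.2 * φ x 0 -
              Real.sin w.2 * deriv (φ x) 0) : ℝ) : ℂ)) -
          Complex.exp (Complex.I *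
            ((∑ k ∈ Finset.range K, (2 * Real.pi * iteratedDeriv k (φ x) 0) *
              (if k = 0 then w.1 * (1 - Real.cos w.2)
               else if k = 1 then w.1 * (w.2 - Real.sin w.2)
               else w.1 * w.2 ^ k / (k.factorial : ℝ)) : ℝ) : ℂ))‖ ≤ ε / 2) := by
  have hπ : (0:ℝ) < Real.pi := Real.pi_pos
  have hsN : 0 < Real.sqrt N := Real.sqrt_pos.2 hN
  have hρ0 : 0 < α / Real.sqrt N := by positivity
  have hρR : α / Real.sqrt N ≤ R / 2 := by
    rw [div_le_div_iff₀ hsN (by norm_num)]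
    nlinarith [hadm]
  have hB0 : (0:ℝ) ≤ Q / (2 * Real.pi) := by positivity
  have key : ∀ x ∈ Set.Icc (0:ℝ) 1 ×ˢ Set.Icc (0:ℝ) 1, ∀ w : ℝ × ℝ,
      0 < w.1 → w.1 ≤ Real.sqrt 2 / 2 * N → |w.2| ≤ α / Real.sqrt N →
      HasSum (fun k : ℕ => (2 * Real.pi * iteratedDeriv k (φ x) 0) *
          (if k = 0 then w.1 * (1 - Real.cos w.2)
           else if k = 1 then w.1 * (w.2 - Real.sin w.2)
           else w.1 * w.2 ^ k / (k.factorial : ℝ)))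
        (2 * Real.pi *
          (w.1 * (φ x w.2 - Real.cos w.2 * φ x 0 - Real.sin w.2 * deriv (φ x) 0))) := by
    intro x hx w hw1 hw2 hw3
    have hb : ∀ (k : ℕ) (t : ℝ), |t| ≤ α / Real.sqrt N →
        |iteratedDeriv k (φ x) t| ≤ (Q / (2 * Real.pi)) * k.factorial / R ^ k := by
      intro k t ht
      have h1 := hQR k x hx t ht
      have h2 : Q / (2 * Real.pi) * k.factorial / R ^ k
          = (Q * k.factorial / R ^ k) / (2 * Real.pi) := by ring
      rw [h2, le_div_iff₀ (by positivity)]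
      nlinarith [h1]
    have hTay := taylor_hasSum hB0 hR hρ0.le hρR (φ x) (hsmooth x hx) hb w.2 hw3
    have hA := hTay.mul_left (2 * Real.pi * w.1)
    have hC0 : HasSum (fun k : ℕ =>
        if k = 0 then -(2 * Real.pi * w.1 * φ x 0 * Real.cos w.2) else 0)
        (-(2 * Real.pi * w.1 * φ x 0 * Real.cos w.2)) := hasSum_ite_eq 0 _
    have hC1 : HasSum (fun k : ℕ =>
        if k = 1 then -(2 * Real.pi * w.1 * deriv (φ x) 0 * Real.sin w.2) else 0)
        (-(2 * Real.pi * w.1 * deriv (φ x) 0 * Real.sin w.2)) := hasSum_ite_eq 1 _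
    have hT := (hA.add hC0).add hC1
    convert hT using 1
    · rfl
    · funext k
      match k with
      | 0 =>
        simp only [if_pos rfl, if_neg (by norm_num : (0:ℕ) ≠ 1)]
        simp [iteratedDeriv_zero]
        ring
      | 1 =>
        simp only [if_neg (by norm_num : (1:ℕ) ≠ 0), if_pos rfl]
        simp [iteratedDeriv_one]
        ring
      | (n+2) =>
        simp only [if_neg (by omega : ¬ n+2 = 0), if_neg (by omega : ¬ n+2 = 1)]
        ring
    · ring
  refine ⟨key, ?_⟩
  intro ε hε0 hε1 K hK2 hKlog x hx w hw1 hw2 hw3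
  have hsum := key x hx w hw1 hw2 hw3
  set F : ℕ → ℝ := fun k : ℕ => (2 * Real.pi * iteratedDeriv k (φ x) 0) *
          (if k = 0 then w.1 * (1 - Real.cos w.2)
           else if k = 1 then w.1 * (w.2 - Real.sin w.2)
           else w.1 * w.2 ^ k / (k.factorial : ℝ)) with hF
  set T : ℝ := 2 * Real.pi *
      (w.1 * (φ x w.2 - Real.cos w.2 * φ x 0 - Real.sin w.2 * deriv (φ x) 0)) with hTdef
  set S : ℝ := Finset.sum (Finset.range K) F with hSdef
  have h1 : (2 * (Real.pi : ℂ) * Complex.I *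
      ((w.1 * (φ x w.2 - Real.cos w.2 * φ x 0 - Real.sin w.2 * deriv (φ x) 0) : ℝ) : ℂ))
      = ((T : ℝ) : ℂ) * Complex.I := by
    rw [hTdef]; push_cast; ring
  have h2 : Complex.I * ((S : ℝ) : ℂ) = ((S : ℝ) : ℂ) * Complex.I := mul_comm _ _
  rw [h1, h2]
  refine le_trans (exp_I_dist T S) ?_
  -- now bound |T - S|
  set q : ℝ := α / (R * Real.sqrt N) with hqdef
  have hq0 : 0 < q := by rw [hqdef]; positivity
  have hq2 : q ≤ 1/2 := by
    rw [hqdef, div_le_div_iff₀ (by positivity) (by norm_num)]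
    nlinarith [hadm]
  set M : ℝ := Q * (Real.sqrt 2 / 2 * N) with hMdef
  have hM0 : (0:ℝ) ≤ M := by rw [hMdef]; positivity
  have hFb : ∀ m : ℕ, 2 ≤ m → |F m| ≤ M * q ^ m := by
    intro m hm
    have hm0 : ¬ m = 0 := by omega
    have hm1 : ¬ m = 1 := by omega
    rw [hF]
    simp only [if_neg hm0, if_neg hm1]
    have hfk : ((m.factorial : ℝ)) ≠ 0 := Nat.cast_ne_zero.2 m.factorial_ne_zero
    have habs : |(2 * Real.pi * iteratedDeriv m (φ x) 0) * (w.1 * w.2 ^ m / (m.factorial : ℝ))|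
        = (2 * Real.pi * |iteratedDeriv m (φ x) 0|) * (w.1 * |w.2| ^ m / (m.factorial : ℝ)) := by
      rw [abs_mul]
      congr 1
      · rw [abs_mul, abs_of_pos (by positivity : (0:ℝ) < 2 * Real.pi)]
      · rw [abs_div, abs_mul, abs_pow, abs_of_pos hw1, Nat.abs_cast]
    rw [habs]
    have h5 : |w.2| / R ≤ q := by
      rw [hqdef]
      calc |w.2| / R ≤ (α / Real.sqrt N) / R := by gcongr
        _ = α / (R * Real.sqrt N) := by rw [div_div, mul_comm]
    calc (2 * Real.pi * |iteratedDeriv m (φ x) 0|) * (w.1 * |w.2| ^ m / (m.factorial : ℝ))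
        ≤ (Q * m.factorial / R ^ m) * (w.1 * |w.2| ^ m / (m.factorial : ℝ)) := by
          refine mul_le_mul_of_nonneg_right (hQR m x hx 0 (by simpa using hρ0.le)) ?_
          positivity
      _ = Q * w.1 * (|w.2| / R) ^ m := by
          rw [div_pow]; field_simp
      _ ≤ M * q ^ m := by
          rw [hMdef]
          have hle : (|w.2| / R) ^ m ≤ q ^ m := pow_le_pow_left₀ (by positivity) h5 m
          exact mul_le_mul (mul_le_mul_of_nonneg_left hw2 hQ.le) hle (by positivity)
            (by positivity)
  have htail : HasSum (fun n : ℕ => F (n + K)) (T - S) := by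
    refine (hasSum_nat_add_iff K).2 ?_
    have he : T - S + ∑ i ∈ Finset.range K, F i = T := by rw [hSdef]; ring
    rwa [he]
  have hgeo : HasSum (fun n : ℕ => M * q ^ (n + K)) (M * q ^ K * (1 - q)⁻¹) := by
    have h6 := (hasSum_geometric_of_lt_one hq0.le (by linarith)).mul_left (M * q ^ K)
    have h7 : (fun n : ℕ => M * q ^ (n + K)) = fun n : ℕ => (M * q ^ K) * q ^ n := by
      funext n; rw [pow_add]; ring
    rw [h7]
    exact h6
  have hub : ∀ n : ℕ, F (n + K) ≤ M * q ^ (n + K) :=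
    fun n => (le_abs_self _).trans (hFb _ (by omega))
  have hlb : ∀ n : ℕ, -(F (n + K)) ≤ M * q ^ (n + K) :=
    fun n => (neg_le_abs _).trans (hFb _ (by omega))
  have h7 : T - S ≤ M * q ^ K * (1 - q)⁻¹ := hasSum_le hub htail hgeo
  have h8 : -(T - S) ≤ M * q ^ K * (1 - q)⁻¹ := by
    refine hasSum_le hlb ?_ hgeo
    simpa using htail.neg
  have h9 : |T - S| ≤ M * q ^ K * (1 - q)⁻¹ := abs_le.2 ⟨by linarith, h7⟩
  have h10 : M * q ^ K * (1 - q)⁻¹ ≤ Real.sqrt 2 * Q * N * q ^ K := by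
    have hinv : (1 - q)⁻¹ ≤ 2 := by
      have hhalf : (1:ℝ)/2 ≤ 1 - q := by linarith
      calc (1 - q)⁻¹ ≤ ((1:ℝ)/2)⁻¹ := by
            apply inv_anti₀ (by norm_num) hhalf
        _ = 2 := by norm_num
    calc M * q ^ K * (1 - q)⁻¹ ≤ M * q ^ K * 2 :=
          mul_le_mul_of_nonneg_left hinv (by positivity)
      _ = Real.sqrt 2 * Q * N * q ^ K := by rw [hMdef]; ring
  have hL2 : 0 < Real.log (R * Real.sqrt N / α) := by
    apply Real.log_pos
    rw [lt_div_iff₀ hα]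
    nlinarith [hadm, hα]
  have h11 : Real.log (2 * Real.sqrt 2 * Q * N / ε)
      ≤ (K:ℝ) * Real.log (R * Real.sqrt N / α) := (div_le_iff₀ hL2).1 hKlog
  have hsqrt2 : (0:ℝ) < Real.sqrt 2 := by positivity
  have h12 : q ^ K ≤ ε / (2 * Real.sqrt 2 * Q * N) := by
    have hqK : q ^ K = Real.exp ((K:ℝ) * Real.log q) := by
      rw [Real.exp_nat_mul, Real.exp_log hq0]
    have hL : Real.log (R * Real.sqrt N / α) = -Real.log q := by
      rw [hqdef, ← Real.log_inv]
      congr 1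
      rw [inv_div]
    have h13 : (K:ℝ) * Real.log q ≤ Real.log (ε / (2 * Real.sqrt 2 * Q * N)) := by
      have he1 : Real.log (ε / (2 * Real.sqrt 2 * Q * N))
          = - Real.log (2 * Real.sqrt 2 * Q * N / ε) := by
        rw [← Real.log_inv]; congr 1; rw [inv_div]
      have he2 : (K:ℝ) * Real.log q = -((K:ℝ) * Real.log (R * Real.sqrt N / α)) := by
        rw [hL]; ring
      rw [he1, he2]
      linarith
    calc q ^ K = Real.exp ((K:ℝ) * Real.log q) := hqK
      _ ≤ Real.exp (Real.log (ε / (2 * Real.sqrt 2 * Q * N))) := Real.exp_le_exp.2 h13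
      _ = ε / (2 * Real.sqrt 2 * Q * N) := Real.exp_log (by positivity)
  calc |T - S| ≤ M * q ^ K * (1 - q)⁻¹ := h9
    _ ≤ Real.sqrt 2 * Q * N * q ^ K := h10
    _ ≤ Real.sqrt 2 * Q * N * (ε / (2 * Real.sqrt 2 * Q * N)) :=
        mul_le_mul_of_nonneg_left h12 (by positivity)
    _ = ε / 2 := by
        field_simp
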